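/- The family $(\tilde z_n)_{n \in \mathbb{Z}}$, where $\tilde z_n = \tilde y_n + F_n \tilde y_{n+1}^{-1}$, is algebraically independent over $K$. -/

import Mathlib

/- Setting: `Yinf K` is the Laurent polynomial ring over the field `K` in commuting variables
`ỹ_n` indexed by `n : ℤ` (realized as the monoid algebra of `ℤ →₀ ℤ`), with fixed nonzero
scalars `F n : K`. -/

noncomputable section

variable (K : Type) [Field K] (F : ℤ → K)

/-- The Laurent polynomial ring `𝒴_∞ = K[ỹ_n^{±1} ; n ∈ ℤ]`. -/
abbrev Yinf := AddMonoidAlgebra K (ℤ →₀ ℤ)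

/-- The variable `ỹ_n`. -/
def yt (n : ℤ) : Yinf K := AddMonoidAlgebra.single (Finsupp.single n (1 : ℤ)) (1 : K)

/-- The inverse variable `ỹ_n⁻¹`. -/
def ytinv (n : ℤ) : Yinf K := AddMonoidAlgebra.single (Finsupp.single n (-1 : ℤ)) (1 : K)

/-- `z̃_n = ỹ_n + F_n ỹ_{n+1}⁻¹`. -/
def zt (n : ℤ) : Yinf K := yt K n + algebraMap K (Yinf K) (F n) * ytinv K (n + 1)

/-- `p` has top (leading) exponent `d` with coefficient `c`, w.r.t. the lex order. -/
def HasTop (p : Yinf K) (d : ℤ →₀ ℤ) (c : K) : Prop :=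
  p.coeff d = c ∧ ∀ e ∈ p.coeff.support, e ≠ d → toLex e < toLex d

variable {K F}

lemma hasTop_le {p : Yinf K} {d : ℤ →₀ ℤ} {c : K} (h : HasTop K p d c) :
    ∀ e ∈ p.coeff.support, toLex e ≤ toLex d := fun e he => by
  rcases eq_or_ne e d with rfl | hne
  · exact le_rfl
  · exact (h.2 e he hne).le

lemma hasTop_single (d : ℤ →₀ ℤ) (c : K) : HasTop K (AddMonoidAlgebra.single d c) d c := by
  refine ⟨Finsupp.single_eq_same, fun e he hne => absurd ?_ hne⟩
  simpa using Finsupp.support_single_subset he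

lemma hasTop_one : HasTop K (1 : Yinf K) 0 1 := by
  simpa [AddMonoidAlgebra.one_def] using hasTop_single (0 : ℤ →₀ ℤ) (1 : K)

lemma hasTop_mul {p q : Yinf K} {d e : ℤ →₀ ℤ} {c c' : K}
    (hp : HasTop K p d c) (hq : HasTop K q e c') : HasTop K (p * q) (d + e) (c * c') := by
  classical
  constructor
  · rw [AddMonoidAlgebra.mul_apply, Finsupp.sum, Finset.sum_eq_single d]
    · rw [Finsupp.sum, Finset.sum_eq_single e]
      · rw [if_pos rfl, hp.1, hq.1]
      · intro b hb hbe
        refine if_neg fun hc => ?_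
        have h1 : toLex d + toLex b = toLex d + toLex e := congrArg toLex hc
        have h2 : toLex b < toLex e :=
          (hasTop_le hq b hb).lt_of_ne fun h => hbe (toLex.injective h)
        exact (add_lt_add_right h2 (toLex d)).ne h1
      · intro hd; rw [if_pos rfl, Finsupp.notMem_support_iff.1 hd, mul_zero]
    · intro a ha hane
      refine Finset.sum_eq_zero fun b hb => if_neg fun hc => ?_
      have h1 : toLex a + toLex b = toLex d + toLex e := congrArg toLex hc
      have h2 : toLex a < toLex d :=
        (hasTop_le hp a ha).lt_of_ne fun h => hane (toLex.injective h)
      exact (add_lt_add_of_lt_of_le h2 (hasTop_le hq b hb)).ne h1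
    · intro hd
      rw [Finsupp.notMem_support_iff.1 hd]
      exact Finset.sum_eq_zero fun b _ => by simp only [zero_mul, ite_self]
  · intro x hx hne
    obtain ⟨a, ha, b, hb, rfl⟩ := Finset.mem_add.1 (AddMonoidAlgebra.support_coeff_mul_subset p q hx)
    have h2 : toLex a + toLex b ≤ toLex d + toLex e :=
      add_le_add (hasTop_le hp a ha) (hasTop_le hq b hb)
    exact lt_of_le_of_ne h2 fun h => hne (toLex.injective h)

lemma hasTop_pow {p : Yinf K} {d : ℤ →₀ ℤ} {c : K} (h : HasTop K p d c) (k : ℕ) :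
    HasTop K (p ^ k) (k • d) (c ^ k) := by
  induction k with
  | zero => simpa using hasTop_one
  | succ k ih =>
    rw [pow_succ, pow_succ, succ_nsmul]
    exact hasTop_mul ih h

lemma hasTop_zt (n : ℤ) : HasTop K (zt K F n) (Finsupp.single n 1) 1 := by
  have hba : (Finsupp.single (n + 1) (-1 : ℤ)) ≠ Finsupp.single n 1 := by
    intro h
    have := DFunLike.congr_fun h n
    rw [Finsupp.single_eq_same, Finsupp.single_eq_of_ne' (by omega)] at this
    exact absurd this (by norm_num)
  have hzt : zt K F n = AddMonoidAlgebra.single (Finsupp.single n (1 : ℤ)) (1 : K)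
      + AddMonoidAlgebra.single (Finsupp.single (n + 1) (-1 : ℤ)) (F n) := by
    unfold zt yt ytinv
    congr 1
    rw [AddMonoidAlgebra.coe_algebraMap]
    simp only [Function.comp_apply, Algebra.algebraMap_self, RingHom.id_apply]
    rw [AddMonoidAlgebra.single_mul_single, zero_add, mul_one]
  rw [hzt]
  constructor
  · rw [AddMonoidAlgebra.coeff_add, AddMonoidAlgebra.coeff_single, AddMonoidAlgebra.coeff_single, Finsupp.add_apply, Finsupp.single_eq_same, Finsupp.single_eq_of_ne' hba, add_zero]
  · intro x hx hne
    have hx' := Finsupp.support_add hx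
    rw [Finset.mem_union] at hx'
    have hxb : x = Finsupp.single (n + 1) (-1 : ℤ) := by
      rcases hx' with h | h
      · exact absurd (by simpa using Finsupp.support_single_subset h) hne
      · simpa using Finsupp.support_single_subset h
    subst hxb
    refine Finsupp.Lex.lt_iff.2 ⟨n, fun j hj => ?_, ?_⟩
    · show (Finsupp.single (n + 1) (-1 : ℤ)) j = (Finsupp.single n (1 : ℤ)) j
      rw [Finsupp.single_eq_of_ne' (by omega), Finsupp.single_eq_of_ne' (by omega)]
    · show (Finsupp.single (n + 1) (-1 : ℤ)) n < (Finsupp.single n (1 : ℤ)) n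
      rw [Finsupp.single_eq_of_ne' (by omega), Finsupp.single_eq_same]
      norm_num

lemma hasTop_prod (s : Finset ℤ) (m : ℤ → ℕ) :
    HasTop K (∏ n ∈ s, zt K F n ^ m n) (∑ n ∈ s, Finsupp.single n (m n : ℤ)) 1 := by
  classical
  induction s using Finset.induction with
  | empty => simpa using hasTop_one
  | @insert n s hns ih =>
    rw [Finset.prod_insert hns, Finset.sum_insert hns]
    have hsm : (m n) • Finsupp.single n (1 : ℤ) = Finsupp.single n (m n : ℤ) := by
      rw [Finsupp.smul_single, nsmul_eq_mul, mul_one]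
    have h := hasTop_mul (hasTop_pow (hasTop_zt (F := F) n) (m n)) ih
    rw [one_pow, one_mul, hsm] at h
    exact h

lemma sum_single_apply (m : ℤ →₀ ℕ) (k : ℤ) :
    (∑ n ∈ m.support, Finsupp.single n (m n : ℤ)) k = (m k : ℤ) := by
  classical
  rw [Finsupp.finset_sum_apply]
  simp only [Finsupp.single_apply]
  rw [Finset.sum_ite_eq' m.support k fun n => (m n : ℤ)]
  by_cases hk : k ∈ m.support
  · rw [if_pos hk]
  · rw [if_neg hk, Finsupp.notMem_support_iff.1 hk, Nat.cast_zero]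

/-- the family `(z̃_n)_{n ∈ ℤ}` is algebraically independent over `K`. -/
theorem stmt_16 (hF : ∀ n, F n ≠ 0) :
    AlgebraicIndependent K (fun n : ℤ => zt K F n) := by
  classical
  rw [algebraicIndependent_iff]
  intro P hP
  by_contra hne
  set Dg : (ℤ →₀ ℕ) → (ℤ →₀ ℤ) := fun m => ∑ n ∈ m.support, Finsupp.single n (m n : ℤ)
    with hDg
  have hDginj : Function.Injective Dg := by
    intro m m' h
    ext k
    have := DFunLike.congr_fun h k
    simp only [hDg, sum_single_apply] at this
    exact_mod_cast this
  obtain ⟨m₀, hm₀, hmax⟩ := Finset.exists_max_image P.support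
    (fun m => toLex (Dg m)) (MvPolynomial.support_nonempty.2 hne)
  have hsummand : ∀ m : ℤ →₀ ℕ,
      HasTop K ((MvPolynomial.aeval fun n : ℤ => zt K F n)
        (MvPolynomial.monomial m (MvPolynomial.coeff m P))) (Dg m) (MvPolynomial.coeff m P) := by
    intro m
    rw [MvPolynomial.aeval_monomial, Finsupp.prod]
    have halg : (algebraMap K (Yinf K)) (MvPolynomial.coeff m P)
        = AddMonoidAlgebra.single 0 (MvPolynomial.coeff m P) := by
      rw [AddMonoidAlgebra.coe_algebraMap]
      simp
    rw [halg]
    have h := hasTop_mul (hasTop_single (0 : ℤ →₀ ℤ) (MvPolynomial.coeff m P))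
      (hasTop_prod (F := F) m.support fun n => m n)
    rw [mul_one, zero_add] at h
    exact h
  have expand : (MvPolynomial.aeval fun n : ℤ => zt K F n) P
      = ∑ m ∈ P.support, (MvPolynomial.aeval fun n : ℤ => zt K F n)
          (MvPolynomial.monomial m (MvPolynomial.coeff m P)) := by
    rw [← map_sum, ← MvPolynomial.as_sum]
  have key : ((MvPolynomial.aeval fun n : ℤ => zt K F n) P).coeff (Dg m₀)
      = MvPolynomial.coeff m₀ P := by
    rw [expand, AddMonoidAlgebra.coeff_sum, Finsupp.finset_sum_apply P.support _ (Dg m₀)]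
    rw [Finset.sum_eq_single m₀]
    · exact (hsummand m₀).1
    · intro m hm hne'
      by_contra h0
      have hmem : Dg m₀ ∈ ((MvPolynomial.aeval fun n : ℤ => zt K F n)
          (MvPolynomial.monomial m (MvPolynomial.coeff m P))).coeff.support :=
        Finsupp.mem_support_iff.2 h0
      have hlt := hasTop_le (hsummand m) _ hmem
      have hle := hmax m hm
      exact hne' (hDginj (toLex.injective (le_antisymm (by exact hle) hlt)))
    · intro h; exact absurd hm₀ h
  rw [hP] at key
  exact (MvPolynomial.mem_support_iff.1 hm₀) key.symm
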